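/- arXiv:2605.05911 — 3 statements merged into one kernel-verified Lean document; each statement's English description precedes it below -/
import Mathlib

section
/- Let μ_1, …, μ_n ∈ ℝ and let g_1, …, g_n be independent standard Gumbel random variables (with CDF F(x) = exp(−e^{−x})). Then for each j, the probability that j maximizes μ_j + g_j equals the softmax probability exp(μ_j) / Σ_{j'} exp(μ_{j'}). -/
open MeasureTheory ProbabilityTheory

/-- The standard Gumbel measure on ℝ, with density e^{-x} exp(-e^{-x}). -/
noncomputable def gumbelMeasure : Measure ℝ :=
  volume.withDensity fun x =>
    ENNReal.ofReal (Real.exp (-x) * Real.exp (-Real.exp (-x)))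

open Real Set Filter Topology

namespace GumbelAux

lemma hasDerivAt_F {b : ℝ} (hb : 0 < b) (x : ℝ) :
    HasDerivAt (fun x => (1 / b) * Real.exp (-(b * Real.exp (-x))))
      (Real.exp (-x) * Real.exp (-(b * Real.exp (-x)))) x := by
  have h0 : HasDerivAt (fun y : ℝ => Real.exp (-y)) (-Real.exp (-x)) x := by
    exact ((Real.hasDerivAt_exp (-x)).comp x (hasDerivAt_neg x)).congr_deriv (by simp)
  have h1 : HasDerivAt (fun y : ℝ => -(b * Real.exp (-y))) (b * Real.exp (-x)) x := by
    have := ((h0.const_mul b).neg)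
    exact this.congr_deriv (by ring)
  have h2 := (Real.hasDerivAt_exp (-(b * Real.exp (-x)))).comp x h1
  have h3 := h2.const_mul (1 / b)
  refine h3.congr_deriv ?_
  field_simp

lemma key_bound {b : ℝ} (hb : 0 < b) (x : ℝ) :
    Real.exp (-x) * Real.exp (-(b * Real.exp (-x))) ≤ (4 / b ^ 2) * Real.exp x := by
  set u := b * Real.exp (-x) with hu
  have hu0 : 0 < u := mul_pos hb (exp_pos _)
  have h1 : u / 2 ≤ Real.exp (u / 2) := by
    have := Real.add_one_le_exp (u / 2); linarith
  have h2 : u ^ 2 / 4 ≤ Real.exp u := by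
    have hm := mul_le_mul h1 h1 (by positivity) (exp_pos _).le
    rw [← Real.exp_add] at hm
    have he : u / 2 + u / 2 = u := by ring
    rw [he] at hm
    nlinarith
  have h3 : Real.exp (-u) ≤ 4 / u ^ 2 := by
    have h4 : u ^ 2 * Real.exp (-u) ≤ 4 := by
      rw [Real.exp_neg, mul_inv_le_iff₀ (exp_pos _)]
      nlinarith
    calc Real.exp (-u) = u ^ 2 * Real.exp (-u) / u ^ 2 := by field_simp
      _ ≤ 4 / u ^ 2 := by gcongr
  calc Real.exp (-x) * Real.exp (-u)
      ≤ Real.exp (-x) * (4 / u ^ 2) := mul_le_mul_of_nonneg_left h3 (exp_pos _).le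
    _ = (4 / b ^ 2) * Real.exp x := by
        rw [hu, Real.exp_neg]
        field_simp

lemma integrable_f {b : ℝ} (hb : 0 < b) :
    Integrable (fun x => Real.exp (-x) * Real.exp (-(b * Real.exp (-x)))) := by
  have hcont : Continuous fun x : ℝ => Real.exp (-x) * Real.exp (-(b * Real.exp (-x))) := by
    continuity
  rw [← integrableOn_univ, ← Set.Iic_union_Ioi (a := (0 : ℝ))]
  apply IntegrableOn.union
  · refine Integrable.mono' ((integrableOn_exp_Iic 0).const_mul (4 / b ^ 2))
      hcont.aestronglyMeasurable.restrict ?_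
    filter_upwards with x
    rw [Real.norm_of_nonneg (by positivity)]
    exact key_bound hb x
  · refine Integrable.mono' (exp_neg_integrableOn_Ioi 0 one_pos)
      hcont.aestronglyMeasurable.restrict ?_
    filter_upwards with x
    rw [Real.norm_of_nonneg (by positivity)]
    calc Real.exp (-x) * Real.exp (-(b * Real.exp (-x)))
        ≤ Real.exp (-x) * 1 := by
          apply mul_le_mul_of_nonneg_left _ (exp_pos _).le
          rw [Real.exp_le_one_iff]
          have : 0 < b * Real.exp (-x) := by positivity
          linarith
      _ = Real.exp (-1 * x) := by rw [mul_one]; ring_nf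

lemma tendsto_F_atBot {b : ℝ} (hb : 0 < b) :
    Tendsto (fun x => (1 / b) * Real.exp (-(b * Real.exp (-x)))) atBot (𝓝 0) := by
  have h1 : Tendsto (fun x : ℝ => b * Real.exp (-x)) atBot atTop := by
    apply Tendsto.const_mul_atTop hb
    exact Real.tendsto_exp_atTop.comp tendsto_neg_atBot_atTop
  have h2 : Tendsto (fun x : ℝ => -(b * Real.exp (-x))) atBot atBot :=
    tendsto_neg_atTop_atBot.comp h1
  have h3 := Real.tendsto_exp_atBot.comp h2
  simpa using h3.const_mul (1 / b)

lemma tendsto_F_atTop {b : ℝ} (hb : 0 < b) :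
    Tendsto (fun x => (1 / b) * Real.exp (-(b * Real.exp (-x)))) atTop (𝓝 (1 / b)) := by
  have h1 : Tendsto (fun x : ℝ => b * Real.exp (-x)) atTop (𝓝 0) := by
    have := Real.tendsto_exp_atBot.comp tendsto_neg_atTop_atBot
    simpa using this.const_mul b
  have h2 : Tendsto (fun x : ℝ => Real.exp (-(b * Real.exp (-x)))) atTop (𝓝 1) := by
    have hneg : Tendsto (fun x : ℝ => -(b * Real.exp (-x))) atTop (𝓝 0) := by
      simpa using h1.neg
    have := (Real.continuous_exp.tendsto 0).comp hneg
    simpa [Function.comp_def] using this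
  have := h2.const_mul (1 / b)
  simpa using this

lemma integral_Iic_f {b : ℝ} (hb : 0 < b) (t : ℝ) :
    ∫ x in Iic t, Real.exp (-x) * Real.exp (-(b * Real.exp (-x)))
      = (1 / b) * Real.exp (-(b * Real.exp (-t))) := by
  have := integral_Iic_of_hasDerivAt_of_tendsto' (a := t)
    (fun x _ => hasDerivAt_F hb x) (integrable_f hb).integrableOn (tendsto_F_atBot hb)
  simpa using this

lemma integral_univ_f {b : ℝ} (hb : 0 < b) :
    ∫ x, Real.exp (-x) * Real.exp (-(b * Real.exp (-x))) = 1 / b := by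
  have := integral_of_hasDerivAt_of_tendsto (fun x => hasDerivAt_F hb x)
    (integrable_f hb) (tendsto_F_atBot hb) (tendsto_F_atTop hb)
  simpa using this

lemma lintegral_univ_f {b : ℝ} (hb : 0 < b) :
    ∫⁻ x, ENNReal.ofReal (Real.exp (-x) * Real.exp (-(b * Real.exp (-x))))
      = ENNReal.ofReal (1 / b) := by
  rw [← ofReal_integral_eq_lintegral_ofReal (integrable_f hb)
    (Filter.Eventually.of_forall fun x => by positivity), integral_univ_f hb]

lemma lintegral_Iic_f {b : ℝ} (hb : 0 < b) (t : ℝ) :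
    ∫⁻ x in Iic t, ENNReal.ofReal (Real.exp (-x) * Real.exp (-(b * Real.exp (-x))))
      = ENNReal.ofReal ((1 / b) * Real.exp (-(b * Real.exp (-t)))) := by
  rw [← ofReal_integral_eq_lintegral_ofReal (integrable_f hb).integrableOn
    (Filter.Eventually.of_forall fun x => by positivity), integral_Iic_f hb t]

lemma gumbel_Iic (t : ℝ) :
    gumbelMeasure (Iic t) = ENNReal.ofReal (Real.exp (-Real.exp (-t))) := by
  rw [gumbelMeasure, withDensity_apply _ measurableSet_Iic]
  have := lintegral_Iic_f one_pos t
  simp only [one_mul, one_div, inv_one] at this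
  simpa using this

instance : IsProbabilityMeasure gumbelMeasure := by
  constructor
  rw [gumbelMeasure, withDensity_apply _ MeasurableSet.univ, Measure.restrict_univ]
  have := lintegral_univ_f one_pos
  simp only [one_mul, one_div, inv_one] at this
  simpa using this

end GumbelAux

/-- Gumbel perturbations induce a Boltzmann (softmax) selection policy. -/
theorem gumbel_max_softmax
    {Ω : Type*} [MeasureSpace Ω] [IsProbabilityMeasure (ℙ : Measure Ω)]
    (n : ℕ) (μ : Fin n → ℝ) (g : Fin n → Ω → ℝ)
    (hmeas : ∀ i, Measurable (g i))
    (hindep : iIndepFun g ℙ)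
    (hdist : ∀ i, Measure.map (g i) ℙ = gumbelMeasure)
    (j : Fin n) :
    ℙ {ω | ∀ j' : Fin n, μ j' + g j' ω ≤ μ j + g j ω}
      = ENNReal.ofReal (Real.exp (μ j) / ∑ j' : Fin n, Real.exp (μ j')) := by
  obtain ⟨m, rfl⟩ : ∃ m, n = m + 1 := ⟨n - 1, (Nat.succ_pred_eq_of_pos j.pos).symm⟩
  set ν := gumbelMeasure with hν
  haveI hνprob : IsProbabilityMeasure ν := by rw [hν]; infer_instance
  -- Step 1: pushforward is the product measure
  set G : Ω → (Fin (m + 1) → ℝ) := fun ω i => g i ω with hGdef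
  have hGmeas : Measurable G := measurable_pi_lambda _ hmeas
  have hmap : Measure.map G ℙ = Measure.pi (fun _ : Fin (m + 1) => ν) := by
    refine (Measure.pi_eq (μ := fun _ : Fin (m + 1) => ν) fun s hs => ?_).symm
    rw [Measure.map_apply hGmeas (MeasurableSet.univ_pi hs)]
    have hpre : G ⁻¹' (Set.pi Set.univ s) = ⋂ i, g i ⁻¹' s i := by
      ext ω; simp [G, Set.mem_univ_pi]
    rw [hpre, show (⋂ i, g i ⁻¹' s i) = ⋂ i ∈ Finset.univ, g i ⁻¹' s i by simp]
    rw [hindep.measure_inter_preimage_eq_mul Finset.univ (fun i _ => hs i)]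
    exact Finset.prod_congr rfl fun i _ => by
      rw [← Measure.map_apply (hmeas i) (hs i), hdist i]
  -- Step 2: rewrite the event
  set S' : Set (Fin (m + 1) → ℝ) := {x | ∀ j', μ j' + x j' ≤ μ j + x j} with hS'def
  have hS'meas : MeasurableSet S' := by
    have : S' = ⋂ j', {x : Fin (m + 1) → ℝ | μ j' + x j' ≤ μ j + x j} := by
      ext x; simp [S']
    rw [this]
    exact MeasurableSet.iInter fun j' => measurableSet_le
      (by fun_prop) (by fun_prop)
  have hev : {ω | ∀ j' : Fin (m + 1), μ j' + g j' ω ≤ μ j + g j ω} = G ⁻¹' S' := rfl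
  rw [hev, ← Measure.map_apply hGmeas hS'meas, hmap]
  -- Step 3: split off coordinate j
  set T : Set (ℝ × (Fin m → ℝ)) :=
    {p | ∀ k, μ (j.succAbove k) + p.2 k ≤ μ j + p.1} with hTdef
  have hTmeas : MeasurableSet T := by
    have : T = ⋂ k, {p : ℝ × (Fin m → ℝ) | μ (j.succAbove k) + p.2 k ≤ μ j + p.1} := by
      ext p; simp [T]
    rw [this]
    exact MeasurableSet.iInter fun k => measurableSet_le (by fun_prop) (by fun_prop)
  set e := MeasurableEquiv.piFinSuccAbove (fun _ : Fin (m + 1) => ℝ) j with hedef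
  have hMP := measurePreserving_piFinSuccAbove (fun _ : Fin (m + 1) => ν) j
  have hS'e : S' = e ⁻¹' T := by
    ext x
    simp only [S', T, Set.mem_preimage, Set.mem_setOf_eq, e,
      MeasurableEquiv.piFinSuccAbove_apply, Fin.insertNthEquiv, Equiv.coe_fn_symm_mk,
      Fin.removeNth]
    rw [Fin.forall_iff_succAbove j]
    simp
  rw [hS'e, ← Measure.map_apply e.measurable hTmeas, hMP.map_eq,
    Measure.prod_apply hTmeas]
  -- Step 4: compute the inner measures
  set A : ℝ := ∑ k : Fin m, Real.exp (μ (j.succAbove k) - μ j) with hAdef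
  have hA0 : 0 ≤ A := Finset.sum_nonneg fun _ _ => (exp_pos _).le
  have hinner : ∀ a : ℝ,
      (Measure.pi fun _ : Fin m => ν) (Prod.mk a ⁻¹' T)
        = ENNReal.ofReal (Real.exp (-(A * Real.exp (-a)))) := by
    intro a
    have hpre : Prod.mk a ⁻¹' T
        = Set.pi Set.univ (fun k => Iic (μ j + a - μ (j.succAbove k))) := by
      ext y
      simp only [T, Set.mem_preimage, Set.mem_setOf_eq, Set.mem_univ_pi, Set.mem_Iic]
      exact forall_congr' fun k => by constructor <;> intro <;> linarith
    rw [hpre, Measure.pi_pi]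
    simp_rw [hν, GumbelAux.gumbel_Iic]
    rw [← ENNReal.ofReal_prod_of_nonneg (fun _ _ => (exp_pos _).le)]
    congr 1
    rw [← Real.exp_sum]
    congr 1
    rw [hAdef, Finset.sum_mul, ← Finset.sum_neg_distrib]
    refine Finset.sum_congr rfl fun k _ => ?_
    rw [← Real.exp_add]
    congr 1
    ring
  rw [lintegral_congr hinner]
  -- Step 5: compute the outer integral
  have hdens : Measurable fun x : ℝ =>
      ENNReal.ofReal (Real.exp (-x) * Real.exp (-Real.exp (-x))) := by fun_prop
  have hfn : Measurable fun a : ℝ => ENNReal.ofReal (Real.exp (-(A * Real.exp (-a)))) := by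
    fun_prop
  rw [hν, gumbelMeasure, lintegral_withDensity_eq_lintegral_mul _ hdens hfn]
  have hcomb : ∀ a : ℝ,
      ((fun x : ℝ => ENNReal.ofReal (Real.exp (-x) * Real.exp (-Real.exp (-x)))) *
        fun a : ℝ => ENNReal.ofReal (Real.exp (-(A * Real.exp (-a))))) a
        = ENNReal.ofReal (Real.exp (-a) * Real.exp (-((1 + A) * Real.exp (-a)))) := by
    intro a
    simp only [Pi.mul_apply]
    rw [← ENNReal.ofReal_mul (by positivity)]
    congr 1
    rw [mul_assoc, ← Real.exp_add]
    congr 2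
    ring
  rw [lintegral_congr hcomb, GumbelAux.lintegral_univ_f (by linarith : (0:ℝ) < 1 + A)]
  congr 1
  have hsum : 1 + A = (∑ j' : Fin (m + 1), Real.exp (μ j')) / Real.exp (μ j) := by
    have hs := Fin.sum_univ_succAbove (fun i => Real.exp (μ i - μ j)) j
    simp only [sub_self, Real.exp_zero] at hs
    rw [hAdef, ← hs]
    rw [Finset.sum_div]
    exact Finset.sum_congr rfl fun i _ => by rw [Real.exp_sub]
  rw [hsum, one_div_div]
end

section
/- Static regret of entropic OMD with decaying step size: suppose for t = 1,…,T the losses are ℓ_t(w) = g_tᵀw with ‖g_t‖_∞ ≤ c, the iterates ŵ_t produced by entropic mirror descent with step sizes η_t = η_0/√(1 + c_η t) all have coordinates at least δ, and the comparator w* ∈ Δ^{K−1}. Then Σ_{t=1}^T ℓ_t(ŵ_t) − Σ_{t=1}^T ℓ_t(w*) ≤ ( log(1/δ)/η_0 + c²η_0/c_η )·√(1 + c_η T). Moreover, with η_0 = √(c_η log(1/δ))/c this bound becomes 2c·√(log(1/δ)/c_η)·√(1 + c_η T). -/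
open Finset



/-- monotonicity helper on `Ici 1`. -/
lemma mono_from_one {f f' : ℝ → ℝ}
    (hd : ∀ x : ℝ, 1 ≤ x → HasDerivAt f (f' x) x)
    (h0 : ∀ x : ℝ, 1 ≤ x → 0 ≤ f' x) {t : ℝ} (ht : 1 ≤ t) : f 1 ≤ f t := by
  have hm : MonotoneOn f (Set.Ici (1:ℝ)) := by
    apply monotoneOn_of_deriv_nonneg (convex_Ici 1)
    · exact fun x hx => (hd x hx).continuousAt.continuousWithinAt
    · intro x hx
      rw [interior_Ici] at hx
      exact ((hd x hx.le).differentiableAt).differentiableWithinAt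
    · intro x hx
      rw [interior_Ici] at hx
      rw [(hd x hx.le).deriv]
      exact h0 x hx.le
  exact hm (by norm_num) ht ht

lemma padeA {t : ℝ} (ht : 1 ≤ t) : 3*(t^2-1)/(t^2+4*t+1) ≤ Real.log t := by
  have key : Real.log 1 - 3*(1^2-1)/(1^2+4*1+1) ≤ Real.log t - 3*(t^2-1)/(t^2+4*t+1) := by
    apply mono_from_one (f := fun y : ℝ => Real.log y - 3*(y^2-1)/(y^2+4*y+1)) (f' := fun x => (x-1)^4/(x*(x^2+4*x+1)^2)) ?_ ?_ ht
    · intro x hx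
      have hx0 : (0:ℝ) < x := by linarith
      have hden : x^2+4*x+1 ≠ 0 := by nlinarith
      have h1 : HasDerivAt (fun y : ℝ => 3*(y^2-1)) (6*x) x := by
        have h := ((hasDerivAt_pow 2 x).sub_const 1).const_mul (3:ℝ)
        refine h.congr_deriv ?_
        ring
      have h2 : HasDerivAt (fun y : ℝ => y^2+4*y+1) (2*x+4) x := by
        have h := ((hasDerivAt_pow 2 x).add ((hasDerivAt_id x).const_mul 4)).add_const 1
        refine h.congr_deriv ?_
        ring
      have h3 := (h1.div h2 hden)
      have h4 := (Real.hasDerivAt_log hx0.ne').sub h3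
      refine h4.congr_deriv ?_
      field_simp
      ring
    · intro x hx
      positivity
  simp [Real.log_one] at key
  linarith

lemma padeB {s : ℝ} (hs : 1 ≤ s) : Real.log s ≤ (s-1)*(s+5)/(2*(2*s+1)) := by
  have key : (1-1)*(1+5)/(2*(2*1+1)) - Real.log 1 ≤ (s-1)*(s+5)/(2*(2*s+1)) - Real.log s := by
    apply mono_from_one (f := fun y : ℝ => (y-1)*(y+5)/(2*(2*y+1)) - Real.log y) (f' := fun x => 4*(x-1)^3/(x*(4*x+2)^2)) ?_ ?_ hs
    · intro x hx
      have hx0 : (0:ℝ) < x := by linarith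
      have hden : 2*(2*x+1) ≠ 0 := by nlinarith
      have h1 : HasDerivAt (fun y : ℝ => (y-1)*(y+5)) (2*x+4) x := by
        have h := ((hasDerivAt_id x).sub_const 1).mul ((hasDerivAt_id x).add_const 5)
        refine h.congr_deriv ?_
        simp [id_eq]
        ring
      have h2 : HasDerivAt (fun y : ℝ => 2*(2*y+1)) (4:ℝ) x := by
        have h := (((hasDerivAt_id x).const_mul 2).add_const 1).const_mul (2:ℝ)
        refine h.congr_deriv ?_
        ring
      have h3 := h1.div h2 hden
      have h4 := h3.sub (Real.hasDerivAt_log hx0.ne')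
      refine h4.congr_deriv ?_
      field_simp
      ring
    · intro x hx
      have hx0 : (0:ℝ) < x := by linarith
      have h3 : (0:ℝ) ≤ (x-1)^3 := pow_nonneg (by linarith) 3
      exact div_nonneg (by linarith) (by positivity)
  simp [Real.log_one] at key
  linarith


lemma padeB' {t : ℝ} (h0 : 0 < t) (h1 : t ≤ 1) :
    (t-1)*(5*t+1)/(2*t*(t+2)) ≤ Real.log t := by
  have hs : 1 ≤ 1/t := one_le_one_div h0 h1
  have hB := padeB hs
  rw [one_div, Real.log_inv] at hB
  have ht2 : t + 2 ≠ 0 := by linarith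
  have e : (t⁻¹-1)*(t⁻¹+5)/(2*(2*t⁻¹+1)) = -((t-1)*(5*t+1)/(2*t*(t+2))) := by
    rw [div_eq_iff (by positivity)]
    field_simp
    ring
  rw [e] at hB
  linarith

lemma key2A {t : ℝ} (ht : 1 ≤ t) (A : ℝ) (hA : A = Real.log t) :
    3*(t-1)^2 ≤ (t*A - t + 1)*(2*t+4) := by
  have h := padeA ht
  rw [← hA, div_le_iff₀ (by positivity)] at h
  -- h : 3*(t^2-1) ≤ A*(t^2+4*t+1)
  have hd : (0:ℝ) < t^2+4*t+1 := by positivity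
  have hint := mul_le_mul_of_nonneg_left h (show (0:ℝ) ≤ t*(2*t+4) by positivity)
  have key : 3*(t-1)^2*(t^2+4*t+1) ≤ (t*A - t + 1)*(2*t+4)*(t^2+4*t+1) := by
    nlinarith [hint, sq_nonneg ((t-1)^2)]
  exact le_of_mul_le_mul_right key hd

lemma key2B {t : ℝ} (h0 : 0 < t) (h1 : t ≤ 1) (A : ℝ) (hA : A = Real.log t) :
    3*(t-1)^2 ≤ (t*A - t + 1)*(2*t+4) := by
  have h := padeB' h0 h1
  rw [← hA, div_le_iff₀ (by positivity)] at h
  -- h : (t-1)*(5*t+1) ≤ A*(2*t*(t+2))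
  nlinarith [h]

lemma coord_pinsker {p q : ℝ} (hp : 0 < p) (hq : 0 < q) :
    3*(p-q)^2/(2*p+4*q) ≤ p * Real.log (p/q) - p + q := by
  have hden : (0:ℝ) < 2*p+4*q := by linarith
  rw [div_le_iff₀ hden]
  obtain ⟨t, rfl⟩ : ∃ t, p = t*q := ⟨p/q, (div_mul_cancel₀ p hq.ne').symm⟩
  have ht0 : 0 < t := by
    by_contra h
    push_neg at h
    nlinarith
  rw [mul_div_cancel_right₀ t hq.ne']
  have key2 : 3*(t-1)^2 ≤ (t*Real.log t - t + 1)*(2*t+4) := by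
    rcases le_total 1 t with h | h
    · exact key2A h _ rfl
    · exact key2B ht0 h _ rfl
  nlinarith [mul_le_mul_of_nonneg_left key2 (sq_nonneg q)]

lemma kl_coord_nonneg {a b : ℝ} (ha : 0 < a) (hb : 0 < b) :
    a - b ≤ a * Real.log (a / b) := by
  have h := Real.log_le_sub_one_of_pos (div_pos hb ha)
  have hlog : Real.log (a/b) = - Real.log (b/a) := by
    rw [← Real.log_inv, inv_div]
  rw [hlog]
  have h2 := mul_le_mul_of_nonneg_left h ha.le
  have e : a * (b/a - 1) = b - a := by field_simp
  rw [e] at h2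
  linarith

lemma kl_coord_eq {a b : ℝ} (ha : 0 < a) (hb : 0 < b)
    (h : a * Real.log (a / b) - a + b ≤ 0) : a = b := by
  by_contra hne
  have hne' : b / a ≠ 1 := by
    intro hh
    exact hne ((div_eq_one_iff_eq ha.ne').1 hh).symm
  have hlt := Real.log_lt_sub_one_of_pos (div_pos hb ha) hne'
  have hlog : Real.log (a/b) = - Real.log (b/a) := by
    rw [← Real.log_inv, inv_div]
  have h2 := mul_lt_mul_of_pos_left hlt ha
  have e : a * (b/a - 1) = b - a := by field_simp
  rw [e] at h2
  rw [hlog] at h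
  nlinarith

lemma pinsker_fin {K : ℕ} (p q : Fin K → ℝ) (hp : ∀ k, 0 < p k) (hq : ∀ k, 0 < q k)
    (hp1 : ∑ k, p k = 1) (hq1 : ∑ k, q k = 1) :
    (∑ k, |p k - q k|) ^ 2 ≤ 2 * ∑ k, p k * Real.log (p k / q k) := by
  have hb : ∀ k : Fin K, (0:ℝ) < (2*p k + 4*q k)/3 := fun k => by
    have := hp k; have := hq k; positivity
  have hCS := Finset.sq_sum_div_le_sum_sq_div Finset.univ
      (fun k => |p k - q k|) (g := fun k => (2*p k + 4*q k)/3) (fun k _ => hb k)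
  have hsumb : ∑ k, (2*p k + 4*q k)/3 = 2 := by
    rw [← Finset.sum_div]
    rw [Finset.sum_add_distrib, ← Finset.mul_sum, ← Finset.mul_sum, hp1, hq1]
    norm_num
  rw [hsumb] at hCS
  have h2 : ∑ k, |p k - q k| ^ 2 / ((2*p k + 4*q k)/3)
      ≤ ∑ k, (p k * Real.log (p k / q k) - p k + q k) := by
    apply Finset.sum_le_sum
    intro k _
    have hco := coord_pinsker (hp k) (hq k)
    rw [sq_abs]
    have e : (p k - q k)^2 / ((2*p k + 4*q k)/3) = 3*(p k - q k)^2/(2*p k+4*q k) := by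
      rw [div_div_eq_mul_div]
      ring_nf
    rw [e]
    exact hco
  have h3 : ∑ k, (p k * Real.log (p k / q k) - p k + q k)
      = ∑ k, p k * Real.log (p k / q k) := by
    rw [Finset.sum_add_distrib, Finset.sum_sub_distrib, hp1, hq1]
    ring
  rw [h3] at h2
  have hd2 : (∑ k, |p k - q k|)^2 / 2 ≤ ∑ k, p k * Real.log (p k / q k) := le_trans hCS h2
  linarith [hd2]


lemma omd_step {K : ℕ} (c ηt δ : ℝ) (hc : 0 < c) (hηt : 0 < ηt) (hδ : 0 < δ)
    (gv p wnext wstar : Fin K → ℝ)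
    (hg : ∀ k, |gv k| ≤ c)
    (hp : ∀ k, δ ≤ p k) (hp1 : ∑ k, p k = 1)
    (hn : ∀ k, δ ≤ wnext k) (hn1 : ∑ k, wnext k = 1)
    (hws0 : ∀ k, 0 ≤ wstar k) (hws1 : ∑ k, wstar k = 1)
    (hupd : ∀ w : Fin K → ℝ, (∀ k, 0 ≤ w k) → (∑ k, w k = 1) →
      ηt * (∑ k, gv k * wnext k) + ∑ k, wnext k * Real.log (wnext k / p k)
        ≤ ηt * (∑ k, gv k * w k) + ∑ k, w k * Real.log (w k / p k)) :
    (∑ k, gv k * p k) - (∑ k, gv k * wstar k)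
      ≤ ηt * c ^ 2 / 2
        + ((∑ k, wstar k * Real.log (wstar k / p k))
            - (∑ k, wstar k * Real.log (wstar k / wnext k))) / ηt := by
  -- K is positive
  have hK : 0 < K := by
    rcases Nat.eq_zero_or_pos K with h | h
    · subst h
      simp at hp1
    · exact h
  have : Nonempty (Fin K) := ⟨⟨0, hK⟩⟩
  have hp' : ∀ k, 0 < p k := fun k => lt_of_lt_of_le hδ (hp k)
  have hn' : ∀ k, 0 < wnext k := fun k => lt_of_lt_of_le hδ (hn k)
  -- the Gibbs update
  set Z : ℝ := ∑ k, p k * Real.exp (-(ηt * gv k)) with hZdef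
  have hZ : 0 < Z :=
    Finset.sum_pos (fun k _ => mul_pos (hp' k) (Real.exp_pos _)) Finset.univ_nonempty
  set x : Fin K → ℝ := fun k => p k * Real.exp (-(ηt * gv k)) / Z with hxdef
  have hx : ∀ k, 0 < x k := fun k => div_pos (mul_pos (hp' k) (Real.exp_pos _)) hZ
  have hx1 : ∑ k, x k = 1 := by
    rw [hxdef, ← Finset.sum_div, ← hZdef, div_self hZ.ne']
  have hlogx : ∀ k, Real.log (x k) = Real.log (p k) - ηt * gv k - Real.log Z := by
    intro k
    rw [hxdef]
    rw [Real.log_div (mul_pos (hp' k) (Real.exp_pos _)).ne' hZ.ne',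
      Real.log_mul (hp' k).ne' (Real.exp_pos _).ne', Real.log_exp]
    ring
  -- potential identity
  have Fid : ∀ w : Fin K → ℝ, (∀ k, 0 ≤ w k) → (∑ k, w k = 1) →
      ηt * (∑ k, gv k * w k) + ∑ k, w k * Real.log (w k / p k)
        = (∑ k, w k * Real.log (w k / x k)) - Real.log Z := by
    intro w hw0 hw1
    have coord : ∀ k, ηt * (gv k * w k) + w k * Real.log (w k / p k)
        = w k * Real.log (w k / x k) - w k * Real.log Z := by
      intro k
      rcases eq_or_lt_of_le (hw0 k) with h | h
      · rw [← h]
        ring_nf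
      · rw [Real.log_div h.ne' (hp' k).ne', Real.log_div h.ne' (hx k).ne', hlogx k]
        ring
    calc ηt * (∑ k, gv k * w k) + ∑ k, w k * Real.log (w k / p k)
        = ∑ k, (ηt * (gv k * w k) + w k * Real.log (w k / p k)) := by
          rw [Finset.sum_add_distrib, Finset.mul_sum]
      _ = ∑ k, (w k * Real.log (w k / x k) - w k * Real.log Z) :=
          Finset.sum_congr rfl fun k _ => coord k
      _ = (∑ k, w k * Real.log (w k / x k)) - (∑ k, w k) * Real.log Z := by
          rw [Finset.sum_sub_distrib, Finset.sum_mul]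
      _ = (∑ k, w k * Real.log (w k / x k)) - Real.log Z := by rw [hw1, one_mul]
  -- wnext = x
  have heq : ∀ k, wnext k = x k := by
    have h1 := hupd x (fun k => (hx k).le) hx1
    rw [Fid wnext (fun k => (hn' k).le) hn1, Fid x (fun k => (hx k).le) hx1] at h1
    have hxx : ∑ k, x k * Real.log (x k / x k) = 0 := by
      apply Finset.sum_eq_zero
      intro k _
      rw [div_self (hx k).ne', Real.log_one, mul_zero]
    rw [hxx] at h1
    have hKL : ∑ k, wnext k * Real.log (wnext k / x k) ≤ 0 := by linarith
    have hterm : ∀ k ∈ Finset.univ,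
        0 ≤ wnext k * Real.log (wnext k / x k) - wnext k + x k := by
      intro k _
      linarith [kl_coord_nonneg (hn' k) (hx k)]
    have hsum0 : ∑ k, (wnext k * Real.log (wnext k / x k) - wnext k + x k) ≤ 0 := by
      rw [Finset.sum_add_distrib, Finset.sum_sub_distrib, hn1, hx1]
      linarith
    intro k
    apply kl_coord_eq (hn' k) (hx k)
    have hle := Finset.single_le_sum hterm (Finset.mem_univ k)
    -- each term nonneg, sum ≤ 0 ⇒ term ≤ 0
    have : ∑ j, (wnext j * Real.log (wnext j / x j) - wnext j + x j) ≥
        wnext k * Real.log (wnext k / x k) - wnext k + x k := hle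
    linarith
  -- A1 : D t - D (t+1)
  have A1 : (∑ k, wstar k * Real.log (wstar k / p k))
      - (∑ k, wstar k * Real.log (wstar k / wnext k))
      = -(ηt * ∑ k, gv k * wstar k) - Real.log Z := by
    have coord : ∀ k, wstar k * Real.log (wstar k / p k)
        - wstar k * Real.log (wstar k / wnext k)
        = wstar k * (-(ηt * gv k) - Real.log Z) := by
      intro k
      rcases eq_or_lt_of_le (hws0 k) with h | h
      · rw [← h]; ring
      · rw [heq k, Real.log_div h.ne' (hp' k).ne', Real.log_div h.ne' (hx k).ne', hlogx k]
        ring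
    calc (∑ k, wstar k * Real.log (wstar k / p k))
        - (∑ k, wstar k * Real.log (wstar k / wnext k))
        = ∑ k, (wstar k * Real.log (wstar k / p k)
            - wstar k * Real.log (wstar k / wnext k)) := by rw [Finset.sum_sub_distrib]
      _ = ∑ k, (wstar k * (-(ηt * gv k) - Real.log Z)) :=
          Finset.sum_congr rfl fun k _ => coord k
      _ = ∑ k, (-(ηt * (gv k * wstar k)) - wstar k * Real.log Z) := by
          apply Finset.sum_congr rfl
          intro k _
          ring
      _ = -(ηt * ∑ k, gv k * wstar k) - (∑ k, wstar k) * Real.log Z := by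
          rw [Finset.sum_sub_distrib, Finset.sum_neg_distrib, Finset.mul_sum, Finset.sum_mul]
      _ = -(ηt * ∑ k, gv k * wstar k) - Real.log Z := by rw [hws1, one_mul]
  -- A2 : log Z
  have A2 : Real.log Z = -(ηt * ∑ k, gv k * x k) - ∑ k, x k * Real.log (x k / p k) := by
    have coord : ∀ k, x k * Real.log (x k / p k)
        = -(ηt * (gv k * x k)) - x k * Real.log Z := by
      intro k
      rw [Real.log_div (hx k).ne' (hp' k).ne', hlogx k]
      ring
    have : ∑ k, x k * Real.log (x k / p k)
        = -(ηt * ∑ k, gv k * x k) - (∑ k, x k) * Real.log Z := by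
      calc ∑ k, x k * Real.log (x k / p k)
          = ∑ k, (-(ηt * (gv k * x k)) - x k * Real.log Z) :=
            Finset.sum_congr rfl fun k _ => coord k
        _ = -(ηt * ∑ k, gv k * x k) - (∑ k, x k) * Real.log Z := by
            rw [Finset.sum_sub_distrib, Finset.sum_neg_distrib, Finset.mul_sum, Finset.sum_mul]
    rw [hx1, one_mul] at this
    linarith
  -- A3 : the per-step slack
  have A3 : ηt * ((∑ k, gv k * p k) - (∑ k, gv k * x k))
      ≤ ηt^2 * c^2/2 + ∑ k, x k * Real.log (x k / p k) := by
    set d : ℝ := ∑ k, |x k - p k| with hddef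
    have hd0 : 0 ≤ d := Finset.sum_nonneg fun k _ => abs_nonneg _
    have hd1 : (∑ k, gv k * p k) - (∑ k, gv k * x k) ≤ c * d := by
      calc (∑ k, gv k * p k) - (∑ k, gv k * x k)
          = ∑ k, gv k * (p k - x k) := by
            rw [← Finset.sum_sub_distrib]
            apply Finset.sum_congr rfl
            intro k _
            ring
        _ ≤ ∑ k, c * |x k - p k| := by
            apply Finset.sum_le_sum
            intro k _
            calc gv k * (p k - x k) ≤ |gv k * (p k - x k)| := le_abs_self _
              _ = |gv k| * |p k - x k| := abs_mul _ _
              _ ≤ c * |p k - x k| := by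
                  apply mul_le_mul_of_nonneg_right (hg k) (abs_nonneg _)
              _ = c * |x k - p k| := by rw [abs_sub_comm]
        _ = c * d := by rw [hddef, Finset.mul_sum]
    have hd2 : d^2 ≤ 2 * ∑ k, x k * Real.log (x k / p k) :=
      pinsker_fin x p hx hp' hx1 hp1
    have step1 : ηt * ((∑ k, gv k * p k) - (∑ k, gv k * x k)) ≤ ηt * (c * d) :=
      mul_le_mul_of_nonneg_left hd1 hηt.le
    nlinarith [sq_nonneg (d - ηt * c)]
  -- combine
  have H : ηt * ((∑ k, gv k * p k) - (∑ k, gv k * wstar k))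
      ≤ ηt^2 * c^2/2 + ((∑ k, wstar k * Real.log (wstar k / p k))
          - (∑ k, wstar k * Real.log (wstar k / wnext k))) := by
    rw [A1, A2]
    nlinarith [A3]
  rw [← sub_nonneg]
  have expand : ηt * c ^ 2 / 2
        + ((∑ k, wstar k * Real.log (wstar k / p k))
            - (∑ k, wstar k * Real.log (wstar k / wnext k))) / ηt
      - ((∑ k, gv k * p k) - (∑ k, gv k * wstar k))
      = (ηt^2 * c^2/2 + ((∑ k, wstar k * Real.log (wstar k / p k))
          - (∑ k, wstar k * Real.log (wstar k / wnext k)))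
        - ηt * ((∑ k, gv k * p k) - (∑ k, gv k * wstar k))) / ηt := by
    field_simp
  rw [expand]
  apply div_nonneg _ hηt.le
  linarith


lemma omd_telescope (η D : ℕ → ℝ) (L : ℝ)
    (hη : ∀ t, 0 < η t) (hmono : ∀ t, η (t+1) ≤ η t)
    (hD0 : ∀ t, 0 ≤ D t) (hDL : ∀ t, D t ≤ L) :
    ∀ T : ℕ, ∑ t ∈ Finset.Icc 1 T, (D t - D (t+1)) / η t
      ≤ L / η T - D (T+1) / η T := by
  intro T
  induction T with
  | zero =>
    rw [show Finset.Icc 1 0 = ∅ from rfl, Finset.sum_empty, sub_nonneg]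
    exact (div_le_div_iff_of_pos_right (hη 0)).2 (hDL 1)
  | succ T ih =>
    rw [Finset.sum_Icc_succ_top (by omega : 1 ≤ T+1)]
    have hinv : 1 / η T ≤ 1 / η (T+1) := one_div_le_one_div_of_le (hη (T+1)) (hmono T)
    have key : D (T+1) * (1/η (T+1)) - D (T+1) * (1/η T)
        ≤ L * (1/η (T+1)) - L * (1/η T) := by
      nlinarith [mul_le_mul_of_nonneg_right (hDL (T+1)) (show (0:ℝ) ≤ 1/η (T+1) - 1/η T by linarith)]
    have h1 : (D (T+1) - D (T+1+1)) / η (T+1)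
        = D (T+1) * (1/η (T+1)) - D (T+1+1) * (1/η (T+1)) := by
      rw [sub_div, mul_one_div, mul_one_div]
    have h2 : L / η (T+1) = L * (1/η (T+1)) := (mul_one_div _ _).symm
    have h3 : D (T+1+1) / η (T+1) = D (T+1+1) * (1/η (T+1)) := (mul_one_div _ _).symm
    have h4 : L / η T = L * (1/η T) := (mul_one_div _ _).symm
    have h5 : D (T+1) / η T = D (T+1) * (1/η T) := (mul_one_div _ _).symm
    linarith [ih]

lemma omd_stepsum (η0 cη : ℝ) (hη0 : 0 < η0) (hcη : 0 < cη) :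
    ∀ T : ℕ, ∑ t ∈ Finset.Icc 1 T, η0 / Real.sqrt (1 + cη * t)
      ≤ 2 * η0 / cη * (Real.sqrt (1 + cη * T) - 1) := by
  intro T
  induction T with
  | zero =>
    rw [show Finset.Icc 1 0 = ∅ from rfl, Finset.sum_empty]
    norm_num [Real.sqrt_one]
  | succ T ih =>
    rw [Finset.sum_Icc_succ_top (by omega : 1 ≤ T+1)]
    have hb : (0:ℝ) < 1 + cη * T := by positivity
    have ha : (0:ℝ) < 1 + cη * (T+1:ℕ) := by positivity
    have ha' : (1:ℝ) + cη * ((T:ℝ)+1) = 1 + cη * ((T+1:ℕ):ℝ) := by push_cast; ring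
    have hsb : 0 < Real.sqrt (1 + cη * T) := Real.sqrt_pos.2 hb
    have hsa : 0 < Real.sqrt (1 + cη * ((T+1:ℕ):ℝ)) := Real.sqrt_pos.2 ha
    have hle : Real.sqrt (1 + cη * T) ≤ Real.sqrt (1 + cη * ((T+1:ℕ):ℝ)) := by
      apply Real.sqrt_le_sqrt
      push_cast
      nlinarith
    have hident : (Real.sqrt (1 + cη * ((T+1:ℕ):ℝ)) - Real.sqrt (1 + cη * T))
        * (Real.sqrt (1 + cη * ((T+1:ℕ):ℝ)) + Real.sqrt (1 + cη * T)) = cη := by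
      have e1 := Real.sq_sqrt ha.le
      have e2 := Real.sq_sqrt hb.le
      push_cast at e1 ⊢
      nlinarith [e1, e2]
    -- step bound : η0 / √(1+cη(T+1)) ≤ 2η0/cη * (√a - √b)
    have hstep : η0 / Real.sqrt (1 + cη * ((T+1:ℕ):ℝ))
        ≤ 2 * η0 / cη * (Real.sqrt (1 + cη * ((T+1:ℕ):ℝ)) - Real.sqrt (1 + cη * T)) := by
      have hdiff : Real.sqrt (1 + cη * ((T+1:ℕ):ℝ)) - Real.sqrt (1 + cη * T)
          = cη / (Real.sqrt (1 + cη * ((T+1:ℕ):ℝ)) + Real.sqrt (1 + cη * T)) := by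
        rw [eq_div_iff (by positivity)]
        exact hident
      rw [hdiff, div_le_iff₀ hsa]
      have e : 2 * η0 / cη * (cη / (Real.sqrt (1 + cη * ((T+1:ℕ):ℝ)) + Real.sqrt (1 + cη * T)))
          * Real.sqrt (1 + cη * ((T+1:ℕ):ℝ))
          = 2 * η0 * Real.sqrt (1 + cη * ((T+1:ℕ):ℝ))
            / (Real.sqrt (1 + cη * ((T+1:ℕ):ℝ)) + Real.sqrt (1 + cη * T)) := by
        field_simp
      rw [e, le_div_iff₀ (by positivity)]
      nlinarith [hle, hη0]
    calc ∑ t ∈ Finset.Icc 1 T, η0 / Real.sqrt (1 + cη * t)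
          + η0 / Real.sqrt (1 + cη * ((T+1:ℕ):ℝ))
        ≤ 2 * η0 / cη * (Real.sqrt (1 + cη * T) - 1)
          + 2 * η0 / cη * (Real.sqrt (1 + cη * ((T+1:ℕ):ℝ)) - Real.sqrt (1 + cη * T)) := by
          exact add_le_add ih hstep
      _ = 2 * η0 / cη * (Real.sqrt (1 + cη * ((T+1:ℕ):ℝ)) - 1) := by ring


/-- Static regret bound of entropic online mirror descent with the decaying
step sizes η_t = η₀/√(1 + c_η t). -/
theorem omd_static_regret
    (K : ℕ) (T : ℕ) (hT : 1 ≤ T)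
    (c η0 cη δ : ℝ) (hc : 0 < c) (hη0 : 0 < η0) (hcη : 0 < cη)
    (hδ0 : 0 < δ) (hδK : δ ≤ 1 / K)
    (g : ℕ → Fin K → ℝ) (hg : ∀ t, ‖(g t : Fin K → ℝ)‖ ≤ c)
    (η : ℕ → ℝ) (hη : ∀ t, η t = η0 / Real.sqrt (1 + cη * t))
    (what : ℕ → Fin K → ℝ)
    (hwhatδ : ∀ t k, δ ≤ what t k) (hwhat1 : ∀ t, ∑ k, what t k = 1)
    (hupdate : ∀ t, ∀ w : Fin K → ℝ, (∀ k, 0 ≤ w k) → (∑ k, w k = 1) →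
      η t * (∑ k, g t k * what (t + 1) k)
          + ∑ k, what (t + 1) k * Real.log (what (t + 1) k / what t k)
        ≤ η t * (∑ k, g t k * w k)
          + ∑ k, w k * Real.log (w k / what t k))
    (wstar : Fin K → ℝ) (hws0 : ∀ k, 0 ≤ wstar k) (hws1 : ∑ k, wstar k = 1) :
    (∑ t ∈ Finset.Icc 1 T, ∑ k, g t k * what t k)
        - ∑ t ∈ Finset.Icc 1 T, ∑ k, g t k * wstar k
      ≤ (Real.log (1 / δ) / η0 + c ^ 2 * η0 / cη) * Real.sqrt (1 + cη * T) ∧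
    (η0 = Real.sqrt (cη * Real.log (1 / δ)) / c →
      (∑ t ∈ Finset.Icc 1 T, ∑ k, g t k * what t k)
          - ∑ t ∈ Finset.Icc 1 T, ∑ k, g t k * wstar k
        ≤ 2 * c * Real.sqrt (Real.log (1 / δ) / cη) * Real.sqrt (1 + cη * T)) := by
  set L := Real.log (1 / δ) with hLdef
  have hK : 0 < K := by
    rcases Nat.eq_zero_or_pos K with h | h
    · exfalso
      subst h
      simp at hδK
      linarith
    · exact h
  have hK1 : (1:ℝ) ≤ (K:ℝ) := by exact_mod_cast hK
  have hδ1 : δ ≤ 1 := hδK.trans (by rw [div_le_one (by linarith)]; exact hK1)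
  have hL0 : 0 ≤ L := Real.log_nonneg (one_le_one_div hδ0 hδ1)
  have hwpos : ∀ t k, 0 < what t k := fun t k => lt_of_lt_of_le hδ0 (hwhatδ t k)
  set D : ℕ → ℝ := fun t => ∑ k, wstar k * Real.log (wstar k / what t k) with hDdef
  have hD0 : ∀ t, 0 ≤ D t := by
    intro t
    have hle : ∑ k, (wstar k - what t k) ≤ ∑ k, wstar k * Real.log (wstar k / what t k) := by
      apply Finset.sum_le_sum
      intro k _
      rcases eq_or_lt_of_le (hws0 k) with h | h
      · rw [← h]
        simp
        linarith [hwpos t k]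
      · exact kl_coord_nonneg h (hwpos t k)
    have hz : ∑ k, (wstar k - what t k) = 0 := by
      rw [Finset.sum_sub_distrib, hws1, hwhat1 t]
      ring
    rw [hDdef]
    linarith
  have hws_le1 : ∀ k, wstar k ≤ 1 := by
    intro k
    have := Finset.single_le_sum (fun i _ => hws0 i) (Finset.mem_univ k)
    rwa [hws1] at this
  have hDL : ∀ t, D t ≤ L := by
    intro t
    have hle : ∀ k ∈ Finset.univ, wstar k * Real.log (wstar k / what t k) ≤ wstar k * L := by
      intro k _
      rcases eq_or_lt_of_le (hws0 k) with h | h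
      · rw [← h]
        simp
      · apply mul_le_mul_of_nonneg_left _ (hws0 k)
        apply Real.log_le_log (div_pos h (hwpos t k))
        exact div_le_div₀ (by norm_num) (hws_le1 k) hδ0 (hwhatδ t k)
    have := Finset.sum_le_sum hle
    rw [← Finset.sum_mul, hws1, one_mul] at this
    exact this
  have hηpos : ∀ t, 0 < η t := by
    intro t
    rw [hη t]
    have : (0:ℝ) < 1 + cη * t := by positivity
    positivity
  have hηmono : ∀ t, η (t+1) ≤ η t := by
    intro t
    rw [hη t, hη (t+1)]
    apply div_le_div_of_nonneg_left hη0.le (Real.sqrt_pos.2 (by positivity))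
    apply Real.sqrt_le_sqrt
    push_cast
    nlinarith [hcη]
  -- per-step bound
  have hstep : ∀ t : ℕ, (∑ k, g t k * what t k) - (∑ k, g t k * wstar k)
      ≤ η t * c ^ 2 / 2 + (D t - D (t+1)) / η t := by
    intro t
    have hgabs : ∀ k, |g t k| ≤ c := by
      intro k
      have h1 := norm_le_pi_norm (g t) k
      rw [Real.norm_eq_abs] at h1
      exact h1.trans (hg t)
    exact omd_step c (η t) δ hc (hηpos t) hδ0 (g t) (what t) (what (t+1)) wstar hgabs
      (hwhatδ t) (hwhat1 t) (hwhatδ (t+1)) (hwhat1 (t+1)) hws0 hws1 (hupdate t)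
  have hsT : 0 < Real.sqrt (1 + cη * T) := Real.sqrt_pos.2 (by positivity)
  -- main chain
  have main : (∑ t ∈ Finset.Icc 1 T, ∑ k, g t k * what t k)
      - ∑ t ∈ Finset.Icc 1 T, ∑ k, g t k * wstar k
      ≤ (L / η0 + c ^ 2 * η0 / cη) * Real.sqrt (1 + cη * T) := by
    rw [← Finset.sum_sub_distrib]
    have h1 : ∑ t ∈ Finset.Icc 1 T, ((∑ k, g t k * what t k) - ∑ k, g t k * wstar k)
        ≤ ∑ t ∈ Finset.Icc 1 T, (η t * c ^ 2 / 2 + (D t - D (t+1)) / η t) :=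
      Finset.sum_le_sum fun t _ => hstep t
    have h2 : ∑ t ∈ Finset.Icc 1 T, (η t * c ^ 2 / 2 + (D t - D (t+1)) / η t)
        = (∑ t ∈ Finset.Icc 1 T, η t * c ^ 2 / 2)
          + ∑ t ∈ Finset.Icc 1 T, (D t - D (t+1)) / η t := Finset.sum_add_distrib
    -- bound on the step-size sum
    have h3 : (∑ t ∈ Finset.Icc 1 T, η t * c ^ 2 / 2)
        ≤ c ^ 2 * η0 / cη * Real.sqrt (1 + cη * T) := by
      have e : ∑ t ∈ Finset.Icc 1 T, η t * c ^ 2 / 2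
          = c ^ 2 / 2 * ∑ t ∈ Finset.Icc 1 T, η0 / Real.sqrt (1 + cη * t) := by
        rw [Finset.mul_sum]
        apply Finset.sum_congr rfl
        intro t _
        rw [hη t]
        ring
      rw [e]
      have h4 := omd_stepsum η0 cη hη0 hcη T
      have h5 : c ^ 2 / 2 * ∑ t ∈ Finset.Icc 1 T, η0 / Real.sqrt (1 + cη * t)
          ≤ c ^ 2 / 2 * (2 * η0 / cη * (Real.sqrt (1 + cη * T) - 1)) :=
        mul_le_mul_of_nonneg_left h4 (by positivity)
      have h6 : c ^ 2 / 2 * (2 * η0 / cη * (Real.sqrt (1 + cη * T) - 1))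
          ≤ c ^ 2 * η0 / cη * Real.sqrt (1 + cη * T) := by
        have e2 : c ^ 2 / 2 * (2 * η0 / cη * (Real.sqrt (1 + cη * T) - 1))
            = c ^ 2 * η0 / cη * Real.sqrt (1 + cη * T) - c ^ 2 * η0 / cη := by
          field_simp
        rw [e2]
        have hpos : 0 ≤ c ^ 2 * η0 / cη := by positivity
        linarith
      linarith
    -- telescoping bound
    have h7 := omd_telescope η D L hηpos hηmono hD0 hDL T
    have h8 : L / η T - D (T+1) / η T ≤ L / η T := by
      have : 0 ≤ D (T+1) / η T := div_nonneg (hD0 (T+1)) (hηpos T).le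
      linarith
    have h9 : L / η T = L * Real.sqrt (1 + cη * T) / η0 := by
      rw [hη T, div_div_eq_mul_div]
    have h10 : (L / η0 + c ^ 2 * η0 / cη) * Real.sqrt (1 + cη * T)
        = L * Real.sqrt (1 + cη * T) / η0 + c ^ 2 * η0 / cη * Real.sqrt (1 + cη * T) := by
      ring
    rw [h10]
    linarith
  refine ⟨main, ?_⟩
  intro hη0eq
  set s := Real.sqrt (cη * L) with hsdef
  have hs0 : 0 < s := by
    rw [hη0eq] at hη0
    have h := mul_pos hη0 hc
    rwa [div_mul_cancel₀ s hc.ne'] at h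
  have hs2 : s ^ 2 = cη * L := Real.sq_sqrt (mul_nonneg hcη.le hL0)
  have hsqrtL : Real.sqrt (L / cη) = s / cη := by
    have e : (s / cη) ^ 2 = L / cη := by
      rw [div_pow, hs2]
      field_simp
    rw [← e, Real.sqrt_sq (by positivity)]
  have hcoef : L / η0 + c ^ 2 * η0 / cη = 2 * c * (s / cη) := by
    rw [hη0eq]
    field_simp
    linear_combination (-1) * hs2
  calc (∑ t ∈ Finset.Icc 1 T, ∑ k, g t k * what t k)
      - ∑ t ∈ Finset.Icc 1 T, ∑ k, g t k * wstar k
      ≤ (L / η0 + c ^ 2 * η0 / cη) * Real.sqrt (1 + cη * T) := main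
    _ = 2 * c * Real.sqrt (L / cη) * Real.sqrt (1 + cη * T) := by
        rw [hcoef, hsqrtL]
end

section
/- Dynamic regret of entropic OMD under preference drift: with linear losses ℓ_t(w) = g_tᵀw, ‖g_t‖_∞ ≤ c, step sizes η_t = η_0/√(1 + c_η t), and both the time-varying comparators w_t and the OMD iterates ŵ_t lying in the truncated simplex Δ_δ^{K−1}, the dynamic regret Σ_t ℓ_t(ŵ_t) − Σ_t ℓ_t(w_t) is at most √(1 + c_η T)·( (log(1/δ) + L_δ·V_T)/η_0 + c²η_0/c_η ), where V_T = Σ_{t=2}^T ‖w_t − w_{t−1}‖_1 and L_δ = 1 + log(1/δ). -/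
open Real

noncomputable def auxF (t : ℝ) : ℝ := t * log t - t + 1 - 3*(t-1)^2/(2*t+4)
noncomputable def auxG (t : ℝ) : ℝ := log t - 6*(t-1)*(t+5)/(2*t+4)^2

lemma auxF_hasDeriv {t : ℝ} (ht : 0 < t) : HasDerivAt auxF (auxG t) t := by
  have h1 : HasDerivAt (fun t : ℝ => t * log t) (log t + 1) t := Real.hasDerivAt_mul_log ht.ne'
  have h2 : HasDerivAt (fun t : ℝ => 3*(t-1)^2) (3*(2*(t-1)^1*1)) t := by
    exact (((hasDerivAt_id t).sub_const 1).pow 2).const_mul 3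
  have h3 : HasDerivAt (fun t : ℝ => 2*t+4) (2*1) t := by
    exact ((hasDerivAt_id t).const_mul 2).add_const 4
  have hne : 2*t+4 ≠ 0 := by nlinarith
  have h4 := h2.div h3 hne
  have h5 := ((h1.sub (hasDerivAt_id t)).add_const 1).sub h4
  refine h5.congr_deriv ?_
  unfold auxG
  field_simp
  ring

lemma auxG_hasDeriv {t : ℝ} (ht : 0 < t) :
    HasDerivAt auxG ((t-1)^2*(t+8)/(t*(t+2)^3)) t := by
  have h1 : HasDerivAt Real.log t⁻¹ t := Real.hasDerivAt_log ht.ne'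
  have ha : HasDerivAt (fun t : ℝ => 6*(t-1)) 6 t := by
    simpa using ((hasDerivAt_id t).sub_const 1).const_mul 6
  have hb : HasDerivAt (fun t : ℝ => t+5) 1 t := (hasDerivAt_id t).add_const 5
  have h2 := ha.mul hb
  have h3 : HasDerivAt (fun t : ℝ => (2*t+4)^2) (2*(2*t+4)^1*(2*1)) t := by
    exact (((hasDerivAt_id t).const_mul 2).add_const 4).pow 2
  have hne : (2*t+4)^2 ≠ 0 := by positivity
  have h4 := h2.div h3 hne
  have h5 := h1.sub h4
  refine h5.congr_deriv ?_
  have hne2 : (2*t+4) ≠ 0 := by nlinarith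
  have hne3 : t + 2 ≠ 0 := by nlinarith
  simp only [Pi.mul_apply]
  field_simp
  ring

lemma auxG_mono : MonotoneOn auxG (Set.Ioi (0:ℝ)) := by
  apply monotoneOn_of_deriv_nonneg (convex_Ioi 0)
  · exact fun t ht => ((auxG_hasDeriv ht).continuousAt).continuousWithinAt
  · intro t ht
    rw [interior_Ioi] at ht
    exact (auxG_hasDeriv ht).differentiableAt.differentiableWithinAt
  · intro t ht
    rw [interior_Ioi] at ht
    rw [(auxG_hasDeriv ht).deriv]
    have ht' : (0:ℝ) < t := ht
    have h1 : (0:ℝ) ≤ (t-1)^2*(t+8) := by nlinarith [sq_nonneg (t-1)]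
    have h2 : (0:ℝ) ≤ t*(t+2)^3 :=
      mul_nonneg ht'.le (pow_pos (by linarith : (0:ℝ) < t+2) 3).le
    exact div_nonneg h1 h2

lemma auxG_one : auxG 1 = 0 := by simp [auxG]

lemma auxF_one : auxF 1 = 0 := by norm_num [auxF]

lemma auxF_nonneg {t : ℝ} (ht : 0 < t) : 0 ≤ auxF t := by
  rcases le_total t 1 with h | h
  · -- antitone on Ioc 0 1
    have hanti : AntitoneOn auxF (Set.Ioc (0:ℝ) 1) := by
      apply antitoneOn_of_deriv_nonpos (convex_Ioc 0 1)
      · intro x hx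
        exact ((auxF_hasDeriv hx.1).continuousAt).continuousWithinAt
      · intro x hx
        rw [interior_Ioc] at hx
        exact (auxF_hasDeriv hx.1).differentiableAt.differentiableWithinAt
      · intro x hx
        rw [interior_Ioc] at hx
        rw [(auxF_hasDeriv hx.1).deriv]
        have := auxG_mono (Set.mem_Ioi.2 hx.1) (Set.mem_Ioi.2 one_pos) hx.2.le
        rw [auxG_one] at this
        exact this
    have := hanti (Set.mem_Ioc.2 ⟨ht, h⟩) (Set.mem_Ioc.2 ⟨one_pos, le_rfl⟩) h
    rw [auxF_one] at this
    exact this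
  · have hmono : MonotoneOn auxF (Set.Ici (1:ℝ)) := by
      apply monotoneOn_of_deriv_nonneg (convex_Ici 1)
      · intro x hx
        exact ((auxF_hasDeriv (lt_of_lt_of_le one_pos hx)).continuousAt).continuousWithinAt
      · intro x hx
        rw [interior_Ici] at hx
        exact (auxF_hasDeriv (lt_trans one_pos hx)).differentiableAt.differentiableWithinAt
      · intro x hx
        rw [interior_Ici] at hx
        rw [(auxF_hasDeriv (lt_trans one_pos hx)).deriv]
        have := auxG_mono (Set.mem_Ioi.2 one_pos) (Set.mem_Ioi.2 (lt_trans one_pos hx)) hx.le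
        rw [auxG_one] at this
        exact this
    have := hmono (Set.mem_Ici.2 le_rfl) (Set.mem_Ici.2 h) h
    rw [auxF_one] at this
    exact this

lemma pointwise_kl {x y : ℝ} (hx : 0 < x) (hy : 0 < y) :
    x - y + 3*(x-y)^2/(2*x+4*y) ≤ x * log (x/y) := by
  have h := auxF_nonneg (div_pos hx hy)
  have h2 : 0 ≤ y * auxF (x/y) := mul_nonneg hy.le h
  have hne : 2*x+4*y ≠ 0 := by nlinarith
  have key : y * auxF (x/y) = x * log (x/y) - (x - y + 3*(x-y)^2/(2*x+4*y)) := by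
    unfold auxF
    field_simp
    ring
  linarith [key ▸ h2]

/-- Pinsker's inequality for finite probability vectors. -/
lemma pinsker (p q : Fin K → ℝ) (hp : ∀ k, 0 < p k) (hq : ∀ k, 0 < q k)
    (hp1 : ∑ k, p k = 1) (hq1 : ∑ k, q k = 1) :
    (∑ k, |p k - q k|)^2 / 2 ≤ ∑ k, p k * log (p k / q k) := by
  have hden : ∀ k, (0:ℝ) < 2 * p k + 4 * q k := fun k => by nlinarith [hp k, hq k]
  have hS : ∑ k, 3*(p k - q k)^2/(2*p k+4*q k) ≤ ∑ k, p k * log (p k / q k) := by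
    have h1 : ∑ k, (p k - q k + 3*(p k - q k)^2/(2*p k+4*q k))
        ≤ ∑ k, p k * log (p k / q k) :=
      Finset.sum_le_sum fun k _ => pointwise_kl (hp k) (hq k)
    have h2 : ∑ k, (p k - q k + 3*(p k - q k)^2/(2*p k+4*q k))
        = ∑ k, 3*(p k - q k)^2/(2*p k+4*q k) := by
      rw [Finset.sum_add_distrib, Finset.sum_sub_distrib, hp1, hq1]
      ring
    linarith
  have hcs := Finset.sum_mul_sq_le_sq_mul_sq Finset.univ
    (fun k => |p k - q k| / Real.sqrt (2 * p k + 4 * q k))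
    (fun k => Real.sqrt (2 * p k + 4 * q k))
  have e1 : ∑ k : Fin K, |p k - q k| / Real.sqrt (2 * p k + 4 * q k)
      * Real.sqrt (2 * p k + 4 * q k) = ∑ k, |p k - q k| :=
    Finset.sum_congr rfl fun k _ =>
      div_mul_cancel₀ _ (Real.sqrt_ne_zero'.mpr (hden k))
  have e2 : ∑ k : Fin K, (|p k - q k| / Real.sqrt (2 * p k + 4 * q k))^2
      = ∑ k, (p k - q k)^2 / (2 * p k + 4 * q k) := by
    refine Finset.sum_congr rfl fun k _ => ?_
    rw [div_pow, sq_abs, Real.sq_sqrt (hden k).le]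
  have e3 : ∑ k : Fin K, (Real.sqrt (2 * p k + 4 * q k))^2 = 6 := by
    have : ∑ k : Fin K, (Real.sqrt (2 * p k + 4 * q k))^2
        = ∑ k, (2 * p k + 4 * q k) :=
      Finset.sum_congr rfl fun k _ => Real.sq_sqrt (hden k).le
    rw [this, Finset.sum_add_distrib, ← Finset.mul_sum, ← Finset.mul_sum, hp1, hq1]
    norm_num
  rw [e1, e2, e3] at hcs
  have h6 : ∑ k, (p k - q k)^2 / (2 * p k + 4 * q k)
      = (1/3) * ∑ k, 3*(p k - q k)^2/(2*p k+4*q k) := by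
    rw [Finset.mul_sum]
    exact Finset.sum_congr rfl fun k _ => by ring
  rw [h6] at hcs
  nlinarith [hS]

/-- KL between positive vectors summing to one is nonnegative. -/
lemma kl_nonneg (p q : Fin K → ℝ) (hp : ∀ k, 0 < p k) (hq : ∀ k, 0 < q k)
    (hp1 : ∑ k, p k = 1) (hq1 : ∑ k, q k = 1) :
    0 ≤ ∑ k, p k * log (p k / q k) :=
  le_trans (by positivity) (pinsker p q hp hq hp1 hq1)

/-- KL upper bound log(1/δ). -/
lemma kl_le (δ : ℝ) (hδ0 : 0 < δ) (p q : Fin K → ℝ)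
    (hp : ∀ k, 0 ≤ p k) (hp1' : ∀ k, p k ≤ 1) (hp1 : ∑ k, p k = 1)
    (hq : ∀ k, δ ≤ q k) :
    ∑ k, p k * log (p k / q k) ≤ log (1/δ) := by
  have h1 : ∀ k, p k * log (p k / q k) ≤ p k * log (1/δ) := by
    intro k
    rcases eq_or_lt_of_le (hp k) with h | h
    · simp [← h]
    · apply mul_le_mul_of_nonneg_left _ (hp k)
      apply Real.log_le_log (div_pos h (lt_of_lt_of_le hδ0 (hq k)))
      rw [div_le_div_iff₀ (lt_of_lt_of_le hδ0 (hq k)) hδ0]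
      nlinarith [hq k, hp1' k, hδ0]
  calc ∑ k, p k * log (p k / q k) ≤ ∑ k, p k * log (1/δ) :=
        Finset.sum_le_sum fun k _ => h1 k
    _ = log (1/δ) := by rw [← Finset.sum_mul, hp1, one_mul]

/-- Lipschitz property of KL in its first argument on the truncated simplex. -/
lemma kl_lipschitz (δ : ℝ) (hδ0 : 0 < δ) (a b q : Fin K → ℝ)
    (ha : ∀ k, δ ≤ a k) (hb : ∀ k, δ ≤ b k) (hq : ∀ k, δ ≤ q k)
    (ha1 : ∀ k, a k ≤ 1) (hb1 : ∀ k, b k ≤ 1) (hq1 : ∀ k, q k ≤ 1)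
    (hδ1 : δ ≤ 1) :
    ∑ k, a k * log (a k / q k) - ∑ k, b k * log (b k / q k)
      ≤ (1 + log (1/δ)) * ∑ k, |a k - b k| := by
  have hL : ∀ k : Fin K, a k * log (a k / q k) - b k * log (b k / q k)
      ≤ (1 + log (1/δ)) * |a k - b k| := by
    intro k
    have hqk : 0 < q k := lt_of_lt_of_le hδ0 (hq k)
    set f : ℝ → ℝ := fun x => x * log x - x * log (q k) with hf
    have key : ∀ x ∈ Set.Icc δ 1, ∀ y ∈ Set.Icc δ 1,
        f y - f x ≤ (1 + log (1/δ)) * |y - x| := by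
      intro x hx y hy
      have hder : ∀ z ∈ Set.Icc δ 1,
          HasDerivWithinAt f (log z + 1 - log (q k)) (Set.Icc δ 1) z := by
        intro z hz
        have h1 : HasDerivAt (fun x : ℝ => x * log x) (log z + 1) z :=
          Real.hasDerivAt_mul_log (by linarith [hz.1] : z ≠ 0)
        have h2 : HasDerivAt (fun x : ℝ => x * log (q k)) (log (q k)) z := by
          simpa using (hasDerivAt_id z).mul_const (log (q k))
        exact ((h1.sub h2).hasDerivWithinAt).congr_deriv (by ring)
      have hbd : ∀ z ∈ Set.Icc δ 1, ‖log z + 1 - log (q k)‖ ≤ 1 + log (1/δ) := by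
        intro z hz
        have hz0 : 0 < z := lt_of_lt_of_le hδ0 hz.1
        have l1 : log δ ≤ log z := Real.log_le_log hδ0 hz.1
        have l2 : log z ≤ 0 := Real.log_nonpos hz0.le hz.2
        have l3 : log δ ≤ log (q k) := Real.log_le_log hδ0 (hq k)
        have l4 : log (q k) ≤ 0 := Real.log_nonpos hqk.le (hq1 k)
        rw [Real.norm_eq_abs, abs_le, one_div, Real.log_inv]
        constructor <;> linarith
      have := Convex.norm_image_sub_le_of_norm_hasDerivWithin_le hder hbd
        (convex_Icc δ 1) hx hy
      calc f y - f x ≤ ‖f y - f x‖ := le_abs_self _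
        _ ≤ (1 + log (1/δ)) * ‖y - x‖ := this
        _ = (1 + log (1/δ)) * |y - x| := by rw [Real.norm_eq_abs]
    have hak : 0 < a k := lt_of_lt_of_le hδ0 (ha k)
    have hbk : 0 < b k := lt_of_lt_of_le hδ0 (hb k)
    have e1 : a k * log (a k / q k) = f (a k) := by
      rw [hf]; rw [Real.log_div hak.ne' hqk.ne']; ring
    have e2 : b k * log (b k / q k) = f (b k) := by
      rw [hf]; rw [Real.log_div hbk.ne' hqk.ne']; ring
    rw [e1, e2]
    have := key (b k) ⟨hb k, hb1 k⟩ (a k) ⟨ha k, ha1 k⟩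
    rwa [show |a k - b k| = |a k - b k| from rfl] at this ⊢
  calc ∑ k, a k * log (a k / q k) - ∑ k, b k * log (b k / q k)
      = ∑ k, (a k * log (a k / q k) - b k * log (b k / q k)) := by
        rw [Finset.sum_sub_distrib]
    _ ≤ ∑ k, (1 + log (1/δ)) * |a k - b k| := Finset.sum_le_sum fun k _ => hL k
    _ = (1 + log (1/δ)) * ∑ k, |a k - b k| := by rw [Finset.mul_sum]

/-- Three-point inequality for the entropic mirror descent minimizer. -/
lemma three_point (δ : ℝ) (hδ0 : 0 < δ) (ηt : ℝ) (gv q ws w : Fin K → ℝ)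
    (hq : ∀ k, δ ≤ q k) (hws : ∀ k, δ ≤ ws k) (hw : ∀ k, δ ≤ w k)
    (hws1 : ∑ k, ws k = 1) (hw1 : ∑ k, w k = 1)
    (hmin : ∀ u : Fin K → ℝ, (∀ k, 0 ≤ u k) → (∑ k, u k = 1) →
        ηt * (∑ k, gv k * ws k) + ∑ k, ws k * log (ws k / q k)
          ≤ ηt * (∑ k, gv k * u k) + ∑ k, u k * log (u k / q k)) :
    ηt * (∑ k, gv k * ws k) + ∑ k, ws k * log (ws k / q k)
      ≤ ηt * (∑ k, gv k * w k) + ∑ k, w k * log (w k / q k)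
        - ∑ k, w k * log (w k / ws k) := by
  set d : Fin K → ℝ := fun k => w k - ws k with hd
  -- the one-dimensional objective along the segment
  set φ : ℝ → ℝ := fun lam =>
    ηt * (∑ k, gv k * (ws k + lam * d k))
      + ∑ k, (ws k + lam * d k) * log ((ws k + lam * d k) / q k) with hφ
  set D : ℝ := ηt * (∑ k, gv k * d k) + ∑ k, d k * (log (ws k / q k) + 1) with hD
  have hqk : ∀ k, (0:ℝ) < q k := fun k => lt_of_lt_of_le hδ0 (hq k)
  have hwsk : ∀ k, (0:ℝ) < ws k := fun k => lt_of_lt_of_le hδ0 (hws k)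
  have hwk : ∀ k, (0:ℝ) < w k := fun k => lt_of_lt_of_le hδ0 (hw k)
  -- rewrite x * log (x / c) as x * log x - x * log c (valid for all x when c > 0)
  have xlog : ∀ (c : ℝ), 0 < c → ∀ x : ℝ, x * log (x / c) = x * log x - x * log c := by
    intro c hc x
    rcases eq_or_ne x 0 with rfl | hx
    · simp
    · rw [Real.log_div hx hc.ne']; ring
  -- derivative of φ at 0
  have hder : HasDerivAt φ D 0 := by
    have h1 : HasDerivAt (fun lam : ℝ => ηt * (∑ k, gv k * (ws k + lam * d k)))
        (ηt * (∑ k, gv k * d k)) 0 := by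
      have : ∀ lam : ℝ, ηt * (∑ k, gv k * (ws k + lam * d k))
          = ηt * (∑ k, gv k * ws k) + lam * (ηt * (∑ k, gv k * d k)) := by
        intro lam
        rw [show (∑ k, gv k * (ws k + lam * d k))
            = (∑ k, gv k * ws k) + lam * ∑ k, gv k * d k by
          rw [Finset.mul_sum, ← Finset.sum_add_distrib]
          exact Finset.sum_congr rfl fun k _ => by ring]
        ring
      rw [show (fun lam : ℝ => ηt * (∑ k, gv k * (ws k + lam * d k)))
          = fun lam : ℝ => ηt * (∑ k, gv k * ws k) + lam * (ηt * (∑ k, gv k * d k))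
          from funext this]
      simpa using ((hasDerivAt_id (0:ℝ)).mul_const
        (ηt * (∑ k, gv k * d k))).const_add (ηt * (∑ k, gv k * ws k))
    have h2 : HasDerivAt (fun lam : ℝ => ∑ k, (ws k + lam * d k) * log ((ws k + lam * d k) / q k))
        (∑ k, d k * (log (ws k / q k) + 1)) 0 := by
      apply HasDerivAt.fun_sum
      intro k _
      have hfk : HasDerivAt (fun lam : ℝ => ws k + lam * d k) (d k) 0 := by
        simpa using ((hasDerivAt_id (0:ℝ)).mul_const (d k)).const_add (ws k)
      have hcomp : HasDerivAt (fun lam : ℝ => (ws k + lam * d k) * log (ws k + lam * d k))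
          ((log (ws k + 0 * d k) + 1) * d k) 0 := by
        exact (Real.hasDerivAt_mul_log (by simpa using (hwsk k).ne')).comp 0 hfk
      have hlin : HasDerivAt (fun lam : ℝ => (ws k + lam * d k) * log (q k))
          (d k * log (q k)) 0 := hfk.mul_const _
      have := hcomp.sub hlin
      have heq : (fun lam : ℝ => (ws k + lam * d k) * log ((ws k + lam * d k) / q k))
          = fun lam : ℝ => (ws k + lam * d k) * log (ws k + lam * d k)
              - (ws k + lam * d k) * log (q k) :=
        funext fun lam => xlog (q k) (hqk k) _
      rw [heq]
      refine this.congr_deriv ?_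
      rw [Real.log_div (hwsk k).ne' (hqk k).ne']
      simp only [zero_mul, add_zero]
      ring
    exact h1.add h2
  -- φ lam ≥ φ 0 for lam ∈ (0, 1]
  have hmin' : ∀ lam ∈ Set.Ioc (0:ℝ) 1, φ 0 ≤ φ lam := by
    intro lam hlam
    have hnn : ∀ k, 0 ≤ ws k + lam * d k := by
      intro k
      have : ws k + lam * d k = (1 - lam) * ws k + lam * w k := by rw [hd]; ring
      rw [this]
      have := hlam.1.le
      have := hlam.2
      nlinarith [hwsk k, hwk k]
    have hsum : ∑ k, (ws k + lam * d k) = 1 := by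
      rw [Finset.sum_add_distrib, hws1, ← Finset.mul_sum]
      rw [show ∑ k, d k = 0 by rw [hd]; rw [Finset.sum_sub_distrib, hw1, hws1]; ring]
      ring
    have := hmin (fun k => ws k + lam * d k) hnn hsum
    simpa [hφ] using this
  -- hence D ≥ 0
  have hD0 : 0 ≤ D := by
    have hderW : HasDerivWithinAt φ D (Set.Ioi (0:ℝ)) 0 := hder.hasDerivWithinAt
    rw [hasDerivWithinAt_iff_tendsto_slope] at hderW
    have hset : (Set.Ioi (0:ℝ)) \ {0} = Set.Ioi (0:ℝ) := by
      ext x; simp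
    rw [hset] at hderW
    refine ge_of_tendsto hderW ?_
    filter_upwards [Ioc_mem_nhdsGT_of_mem (Set.mem_Ico.2 ⟨le_rfl, one_pos⟩)] with lam hlam
    rw [slope_def_field]
    have h1 := hmin' lam hlam
    have h2 : (0:ℝ) < lam - 0 := by simpa using hlam.1
    exact div_nonneg (by linarith) (by linarith)
  -- conclude
  have e1 : ∀ k : Fin K, w k * log (w k / q k) - w k * log (w k / ws k)
      = w k * log (ws k / q k) := by
    intro k
    rw [Real.log_div (hwk k).ne' (hqk k).ne', Real.log_div (hwk k).ne' (hwsk k).ne',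
      Real.log_div (hwsk k).ne' (hqk k).ne']
    ring
  have e2 : ∑ k, w k * log (w k / q k) - ∑ k, w k * log (w k / ws k)
      = ∑ k, w k * log (ws k / q k) := by
    rw [← Finset.sum_sub_distrib]
    exact Finset.sum_congr rfl fun k _ => e1 k
  have e3 : ∑ k, ws k * log (ws k / q k) = ∑ k, ws k * (log (ws k / q k)) := rfl
  have e4 : ∑ k, d k * (log (ws k / q k) + 1)
      = (∑ k, w k * log (ws k / q k)) - (∑ k, ws k * log (ws k / q k)) := by
    have hds : ∑ k, d k = 0 := by
      rw [hd, Finset.sum_sub_distrib, hw1, hws1]; ring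
    have : ∑ k, d k * (log (ws k / q k) + 1)
        = (∑ k, (w k * log (ws k / q k) - ws k * log (ws k / q k))) + ∑ k, d k := by
      rw [← Finset.sum_add_distrib]
      exact Finset.sum_congr rfl fun k _ => by rw [hd]; ring
    rw [this, hds, Finset.sum_sub_distrib]
    ring
  have e5 : ηt * (∑ k, gv k * d k)
      = ηt * (∑ k, gv k * w k) - ηt * (∑ k, gv k * ws k) := by
    have : ∑ k, gv k * d k = (∑ k, gv k * w k) - ∑ k, gv k * ws k := by
      rw [← Finset.sum_sub_distrib]
      exact Finset.sum_congr rfl fun k _ => by rw [hd]; ring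
    rw [this]; ring
  rw [hD] at hD0
  linarith [hD0, e2, e4, e5]

/-- Weighted telescoping bound. -/
lemma telescope_aux (A B V ηf : ℕ → ℝ) (Lg : ℝ) (hLg : 0 ≤ Lg)
    (hA1 : A 1 ≤ Lg) (hBle : ∀ t, B t ≤ Lg) (hB0 : ∀ t, 0 ≤ B t)
    (hstep : ∀ t, 1 ≤ t → A (t+1) - B t ≤ V (t+1))
    (hV0 : ∀ t, 0 ≤ V t)
    (hηpos : ∀ t, 0 < ηf t) (hηanti : ∀ t, ηf (t+1) ≤ ηf t)
    (T : ℕ) (hT : 1 ≤ T) :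
    ∑ t ∈ Finset.Icc 1 T, (A t - B t)/ηf t
      ≤ (Lg + ∑ t ∈ Finset.Icc 2 T, V t)/ηf T - B T/ηf T := by
  induction T, hT using Nat.le_induction with
  | base =>
    rw [show Finset.Icc 1 1 = {1} from rfl, show Finset.Icc 2 1 = ∅ from rfl]
    simp only [Finset.sum_singleton, Finset.sum_empty, add_zero]
    rw [← sub_div]
    exact (div_le_div_iff_of_pos_right (hηpos 1)).mpr (by linarith)
  | succ n hn ih =>
    have hS0 : 0 ≤ ∑ t ∈ Finset.Icc 2 n, V t :=
      Finset.sum_nonneg fun t _ => hV0 t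
    have h1 : ∑ t ∈ Finset.Icc 1 (n+1), (A t - B t)/ηf t
        = (∑ t ∈ Finset.Icc 1 n, (A t - B t)/ηf t) + (A (n+1) - B (n+1))/ηf (n+1) := by
      rw [Finset.sum_Icc_succ_top (by omega : 1 ≤ n + 1)]
    have h2 : ∑ t ∈ Finset.Icc 2 (n+1), V t
        = (∑ t ∈ Finset.Icc 2 n, V t) + V (n+1) := by
      rw [Finset.sum_Icc_succ_top (by omega : 2 ≤ n + 1)]
    have h3 : (Lg + ∑ t ∈ Finset.Icc 2 n, V t)/ηf n - B n/ηf n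
        ≤ (Lg + ∑ t ∈ Finset.Icc 2 n, V t - B n)/ηf (n+1) := by
      rw [← sub_div]
      have hnum : 0 ≤ Lg + ∑ t ∈ Finset.Icc 2 n, V t - B n := by
        linarith [hBle n]
      exact div_le_div_of_nonneg_left hnum (hηpos (n+1)) (hηanti n)
    calc ∑ t ∈ Finset.Icc 1 (n+1), (A t - B t)/ηf t
        = (∑ t ∈ Finset.Icc 1 n, (A t - B t)/ηf t) + (A (n+1) - B (n+1))/ηf (n+1) := h1
      _ ≤ ((Lg + ∑ t ∈ Finset.Icc 2 n, V t)/ηf n - B n/ηf n)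
            + (A (n+1) - B (n+1))/ηf (n+1) := by linarith [ih]
      _ ≤ (Lg + ∑ t ∈ Finset.Icc 2 n, V t - B n)/ηf (n+1)
            + (A (n+1) - B (n+1))/ηf (n+1) := by linarith [h3]
      _ ≤ (Lg + ∑ t ∈ Finset.Icc 2 (n+1), V t)/ηf (n+1) - B (n+1)/ηf (n+1) := by
          rw [h2, ← add_div, ← sub_div]
          exact (div_le_div_iff_of_pos_right (hηpos (n+1))).mpr (by linarith [hstep n hn])
  
/-- Step-size sum bound. -/
lemma eta_sum (η0 cη : ℝ) (hη0 : 0 < η0) (hcη : 0 < cη) (T : ℕ) :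
    ∑ t ∈ Finset.Icc 1 T, η0 / Real.sqrt (1 + cη * t)
      ≤ (2*η0/cη) * (Real.sqrt (1 + cη * T) - 1) := by
  induction T with
  | zero => simp
  | succ n ih =>
    have key : η0 / Real.sqrt (1 + cη * (n+1))
        ≤ (2*η0/cη) * (Real.sqrt (1 + cη * (n+1)) - Real.sqrt (1 + cη * n)) := by
      set a := Real.sqrt (1 + cη * n) with ha
      set b := Real.sqrt (1 + cη * (n+1)) with hb
      have ha0 : (0:ℝ) < 1 + cη * n := by positivity
      have hb0 : (0:ℝ) < 1 + cη * (n+1) := by positivity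
      have ha2 : a^2 = 1 + cη * n := Real.sq_sqrt ha0.le
      have hb2 : b^2 = 1 + cη * (n+1) := Real.sq_sqrt hb0.le
      have hap : 0 < a := Real.sqrt_pos.mpr ha0
      have hbp : 0 < b := Real.sqrt_pos.mpr hb0
      have hab : a ≤ b := Real.sqrt_le_sqrt (by nlinarith)
      rw [div_le_iff₀ hbp, div_mul_eq_mul_div, div_mul_eq_mul_div, le_div_iff₀ hcη]
      nlinarith [sq_nonneg (b - a)]
    rw [Finset.sum_Icc_succ_top (by omega : 1 ≤ n + 1)]
    push_cast
    push_cast at ih key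
    linarith

/-- One-step regret bound for entropic OMD. -/
lemma step_bound (δ c ηt : ℝ) (hδ0 : 0 < δ) (hc : 0 < c) (hηt : 0 < ηt)
    (gv q qn wt : Fin K → ℝ)
    (hgv : ∀ k, |gv k| ≤ c)
    (hq : ∀ k, δ ≤ q k) (hqn : ∀ k, δ ≤ qn k) (hwt : ∀ k, δ ≤ wt k)
    (hq1 : ∑ k, q k = 1) (hqn1 : ∑ k, qn k = 1) (hwt1 : ∑ k, wt k = 1)
    (hmin : ∀ u : Fin K → ℝ, (∀ k, 0 ≤ u k) → (∑ k, u k = 1) →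
        ηt * (∑ k, gv k * qn k) + ∑ k, qn k * log (qn k / q k)
          ≤ ηt * (∑ k, gv k * u k) + ∑ k, u k * log (u k / q k)) :
    (∑ k, gv k * q k) - (∑ k, gv k * wt k)
      ≤ ηt * c^2/2
        + ((∑ k, wt k * log (wt k / q k)) - (∑ k, wt k * log (wt k / qn k)))/ηt := by
  have hqk : ∀ k, (0:ℝ) < q k := fun k => lt_of_lt_of_le hδ0 (hq k)
  have hqnk : ∀ k, (0:ℝ) < qn k := fun k => lt_of_lt_of_le hδ0 (hqn k)
  set X := ∑ k, |qn k - q k| with hX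
  set A := ∑ k, wt k * log (wt k / q k) with hA
  set B := ∑ k, wt k * log (wt k / qn k) with hB
  set C := ∑ k, qn k * log (qn k / q k) with hC
  have h3p := three_point δ hδ0 ηt gv q qn wt hq hqn hwt hqn1 hwt1 hmin
  have hpin : X^2/2 ≤ C := pinsker qn q hqnk hqk hqn1 hq1
  have hgd : (∑ k, gv k * q k) - (∑ k, gv k * qn k) ≤ c * X := by
    have h1 : (∑ k, gv k * q k) - (∑ k, gv k * qn k)
        = ∑ k, gv k * (q k - qn k) := by
      rw [← Finset.sum_sub_distrib]
      exact Finset.sum_congr rfl fun k _ => by ring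
    rw [h1, hX, Finset.mul_sum]
    apply Finset.sum_le_sum
    intro k _
    calc gv k * (q k - qn k) ≤ |gv k * (q k - qn k)| := le_abs_self _
      _ = |gv k| * |qn k - q k| := by rw [abs_mul, abs_sub_comm]
      _ ≤ c * |qn k - q k| := mul_le_mul_of_nonneg_right (hgv k) (abs_nonneg _)
  have key : ηt * ((∑ k, gv k * q k) - (∑ k, gv k * wt k)) ≤ ηt^2 * c^2/2 + (A - B) := by
    nlinarith [sq_nonneg (X - ηt * c), hηt, h3p, hpin, hgd,
      mul_le_mul_of_nonneg_left hgd hηt.le]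
  have h2 : (∑ k, gv k * q k) - (∑ k, gv k * wt k) ≤ (ηt^2 * c^2/2 + (A - B))/ηt := by
    rw [le_div_iff₀ hηt]
    linarith [key]
  calc (∑ k, gv k * q k) - (∑ k, gv k * wt k)
      ≤ (ηt^2 * c^2/2 + (A - B))/ηt := h2
    _ = ηt * c^2/2 + (A - B)/ηt := by field_simp

/-- Dynamic regret bound of entropic online mirror descent under preference
drift, with path-length V_T and L_δ = 1 + log(1/δ). -/
theorem omd_dynamic_regret
    (K : ℕ) (T : ℕ) (hT : 1 ≤ T)
    (c η0 cη δ : ℝ) (hc : 0 < c) (hη0 : 0 < η0) (hcη : 0 < cη)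
    (hδ0 : 0 < δ) (hδK : δ ≤ 1 / K)
    (g : ℕ → Fin K → ℝ) (hg : ∀ t, ‖(g t : Fin K → ℝ)‖ ≤ c)
    (η : ℕ → ℝ) (hη : ∀ t, η t = η0 / Real.sqrt (1 + cη * t))
    (what : ℕ → Fin K → ℝ)
    (hwhatδ : ∀ t k, δ ≤ what t k) (hwhat1 : ∀ t, ∑ k, what t k = 1)
    (hupdate : ∀ t, ∀ w : Fin K → ℝ, (∀ k, 0 ≤ w k) → (∑ k, w k = 1) →
      η t * (∑ k, g t k * what (t + 1) k)
          + ∑ k, what (t + 1) k * Real.log (what (t + 1) k / what t k)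
        ≤ η t * (∑ k, g t k * w k)
          + ∑ k, w k * Real.log (w k / what t k))
    (w : ℕ → Fin K → ℝ)
    (hwδ : ∀ t k, δ ≤ w t k) (hw1 : ∀ t, ∑ k, w t k = 1) :
    (∑ t ∈ Finset.Icc 1 T, ∑ k, g t k * what t k)
        - ∑ t ∈ Finset.Icc 1 T, ∑ k, g t k * w t k
      ≤ Real.sqrt (1 + cη * T)
          * ((Real.log (1 / δ)
                + (1 + Real.log (1 / δ))
                    * ∑ t ∈ Finset.Icc 2 T, ∑ k, |w t k - w (t - 1) k|) / η0
              + c ^ 2 * η0 / cη) := by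
  -- basic facts
  have hK : 0 < K := by
    by_contra h
    have hK0 : K = 0 := by omega
    subst hK0
    have := hwhat1 0
    simp at this
  have hδ1 : δ ≤ 1 := by
    refine hδK.trans ?_
    rw [div_le_one (by exact_mod_cast hK)]
    exact_mod_cast hK
  have hLg0 : 0 ≤ log (1/δ) :=
    Real.log_nonneg (by rw [le_div_iff₀ hδ0]; linarith)
  have hL0 : (0:ℝ) ≤ 1 + log (1/δ) := by linarith
  have hcoord : ∀ (p : Fin K → ℝ), (∀ k, δ ≤ p k) → (∑ k, p k = 1) → ∀ k, p k ≤ 1 := by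
    intro p hp hp1 k
    have h1 : ∀ j ∈ Finset.univ, (0:ℝ) ≤ p j := fun j _ => le_trans hδ0.le (hp j)
    have := Finset.single_le_sum h1 (Finset.mem_univ k)
    rwa [hp1] at this
  have hsq : ∀ t : ℕ, (0:ℝ) < 1 + cη * t := fun t => by positivity
  have hηpos : ∀ t, 0 < η t := fun t => by
    rw [hη t]; exact div_pos hη0 (Real.sqrt_pos.mpr (hsq t))
  have hηanti : ∀ t, η (t+1) ≤ η t := by
    intro t
    rw [hη t, hη (t+1)]
    apply div_le_div_of_nonneg_left hη0.le (Real.sqrt_pos.mpr (hsq t))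
    apply Real.sqrt_le_sqrt
    push_cast
    nlinarith [hcη]
  -- abbreviations
  set A : ℕ → ℝ := fun t => ∑ k, w t k * log (w t k / what t k) with hA
  set B : ℕ → ℝ := fun t => ∑ k, w t k * log (w t k / what (t+1) k) with hB
  set V : ℕ → ℝ := fun t => (1 + log (1/δ)) * ∑ k, |w t k - w (t-1) k| with hV
  -- per-step bound
  have hstep : ∀ t, (∑ k, g t k * what t k) - (∑ k, g t k * w t k)
      ≤ η t * c^2/2 + (A t - B t)/η t := by
    intro t
    apply step_bound δ c (η t) hδ0 hc (hηpos t) (g t) (what t) (what (t+1)) (w t)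
      (fun k => by rw [← Real.norm_eq_abs]; exact (norm_le_pi_norm (g t) k).trans (hg t))
      (hwhatδ t) (hwhatδ (t+1)) (hwδ t) (hwhat1 t) (hwhat1 (t+1)) (hw1 t)
      (hupdate t)
  -- telescoping bound
  have htel : ∑ t ∈ Finset.Icc 1 T, (A t - B t)/η t
      ≤ (log (1/δ) + ∑ t ∈ Finset.Icc 2 T, V t)/η T - B T/η T := by
    apply telescope_aux A B V η (log (1/δ)) hLg0
    · exact kl_le δ hδ0 (w 1) (what 1) (fun k => le_trans hδ0.le (hwδ 1 k))
        (hcoord (w 1) (hwδ 1) (hw1 1)) (hw1 1) (hwhatδ 1)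
    · intro t
      exact kl_le δ hδ0 (w t) (what (t+1)) (fun k => le_trans hδ0.le (hwδ t k))
        (hcoord (w t) (hwδ t) (hw1 t)) (hw1 t) (hwhatδ (t+1))
    · intro t
      exact kl_nonneg (w t) (what (t+1)) (fun k => lt_of_lt_of_le hδ0 (hwδ t k))
        (fun k => lt_of_lt_of_le hδ0 (hwhatδ (t+1) k)) (hw1 t) (hwhat1 (t+1))
    · intro t ht
      have hlip := kl_lipschitz δ hδ0 (w (t+1)) (w t) (what (t+1))
        (hwδ (t+1)) (hwδ t) (hwhatδ (t+1))
        (hcoord (w (t+1)) (hwδ (t+1)) (hw1 (t+1))) (hcoord (w t) (hwδ t) (hw1 t))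
        (hcoord (what (t+1)) (hwhatδ (t+1)) (hwhat1 (t+1))) hδ1
      have he : (t+1) - 1 = t := by omega
      simpa [hV, hA, hB, he] using hlip
    · intro t
      exact mul_nonneg hL0 (Finset.sum_nonneg fun k _ => abs_nonneg _)
    · exact hηpos
    · exact hηanti
    · exact hT
  -- sum the per-step bounds
  have hsum : (∑ t ∈ Finset.Icc 1 T, ∑ k, g t k * what t k)
      - ∑ t ∈ Finset.Icc 1 T, ∑ k, g t k * w t k
      ≤ (∑ t ∈ Finset.Icc 1 T, η t * c^2/2)
        + ∑ t ∈ Finset.Icc 1 T, (A t - B t)/η t := by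
    rw [← Finset.sum_sub_distrib, ← Finset.sum_add_distrib]
    exact Finset.sum_le_sum fun t _ => hstep t
  -- step-size sum
  have hetasum : ∑ t ∈ Finset.Icc 1 T, η t * c^2/2
      ≤ (c^2/2) * ((2*η0/cη) * (Real.sqrt (1 + cη * T) - 1)) := by
    have h1 : ∑ t ∈ Finset.Icc 1 T, η t * c^2/2
        = (c^2/2) * ∑ t ∈ Finset.Icc 1 T, η0 / Real.sqrt (1 + cη * t) := by
      rw [Finset.mul_sum]
      exact Finset.sum_congr rfl fun t _ => by rw [hη t]; ring
    rw [h1]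
    exact mul_le_mul_of_nonneg_left (eta_sum η0 cη hη0 hcη T) (by positivity)
  -- final numeric assembly
  set s := Real.sqrt (1 + cη * T) with hs
  have hspos : 0 < s := Real.sqrt_pos.mpr (hsq T)
  set VT := ∑ t ∈ Finset.Icc 2 T, ∑ k, |w t k - w (t-1) k| with hVT
  have hVsum : ∑ t ∈ Finset.Icc 2 T, V t = (1 + log (1/δ)) * VT := by
    rw [hVT, Finset.mul_sum]
  have hVT0 : 0 ≤ VT :=
    Finset.sum_nonneg fun t _ => Finset.sum_nonneg fun k _ => abs_nonneg _
  set M := log (1/δ) + (1 + log (1/δ)) * VT with hM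
  have hM0 : 0 ≤ M := by
    have : 0 ≤ (1 + log (1/δ)) * VT := mul_nonneg hL0 hVT0
    rw [hM]; linarith
  have hηT : η T = η0 / s := by rw [hη T]
  have hBT0 : 0 ≤ B T / η T :=
    div_nonneg (kl_nonneg (w T) (what (T+1)) (fun k => lt_of_lt_of_le hδ0 (hwδ T k))
      (fun k => lt_of_lt_of_le hδ0 (hwhatδ (T+1) k)) (hw1 T) (hwhat1 (T+1)))
      (hηpos T).le
  have hfrac : (log (1/δ) + ∑ t ∈ Finset.Icc 2 T, V t)/η T = M * s / η0 := by
    rw [hVsum, hηT, ← hM, div_div_eq_mul_div]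
  have hc2 : (c^2/2) * ((2*η0/cη) * (s - 1)) ≤ c^2 * η0/cη * s := by
    have he : (c^2/2) * ((2*η0/cη) * (s - 1)) = c^2 * η0/cη * (s - 1) := by
      field_simp
    rw [he]
    have : (0:ℝ) ≤ c^2 * η0/cη := by positivity
    nlinarith [this]
  have hfinal : M * s / η0 + c^2 * η0/cη * s = s * (M / η0 + c^2 * η0 / cη) := by
    field_simp
  calc (∑ t ∈ Finset.Icc 1 T, ∑ k, g t k * what t k)
      - ∑ t ∈ Finset.Icc 1 T, ∑ k, g t k * w t k
      ≤ (∑ t ∈ Finset.Icc 1 T, η t * c^2/2)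
        + ∑ t ∈ Finset.Icc 1 T, (A t - B t)/η t := hsum
    _ ≤ (c^2/2) * ((2*η0/cη) * (s - 1)) + ((log (1/δ) + ∑ t ∈ Finset.Icc 2 T, V t)/η T - B T/η T) := by
        exact add_le_add hetasum htel
    _ ≤ c^2 * η0/cη * s + M * s / η0 := by
        rw [hfrac] at *
        linarith [hc2, hBT0]
    _ = s * (M / η0 + c^2 * η0 / cη) := by linarith [hfinal]
end
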